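/- Let V be a finite-dimensional real vector space, η a nondegenerate symmetric bilinear form on V, and J : V → V a linear operator with J ∘ J = id_V and η(J a, b) + η(a, J b) = 0 for all a, b ∈ V, and let V₊ be the +1 eigenspace of J. Then the restriction map λ ↦ λ|_{V₊} is an isomorphism of real Lie algebras from the Lie algebra {λ : V → V linear | λ ∘ J = J ∘ λ and η(λ a, b) + η(a, λ b) = 0 for all a, b} (with commutator bracket) onto the general linear Lie algebra gl(V₊) of all linear endomorphisms of V₊. -/

import Mathlib

attribute [local instance 100] LieRing.ofAssociativeRing

section Stmt5Aux

variable {V : Type*} [AddCommGroup V] [Module ℝ V]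

private theorem s5_memP (J : Module.End ℝ V) {v : V} :
    v ∈ J.eigenspace 1 ↔ J v = v := by
  rw [Module.End.mem_eigenspace_iff, one_smul]

private theorem s5_memN (J : Module.End ℝ V) {v : V} :
    v ∈ J.eigenspace (-1) ↔ J v = -v := by
  rw [Module.End.mem_eigenspace_iff, neg_smul, one_smul]

private theorem s5_JJ (J : Module.End ℝ V) (hJ2 : J * J = 1) (v : V) : J (J v) = v := by
  have := congrArg (fun f : Module.End ℝ V => f v) hJ2
  simpa [Module.End.mul_apply] using this

/-- Projection onto the +1 eigenspace. -/
private noncomputable def s5_pP (J : Module.End ℝ V) (hJ2 : J * J = 1) :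
    V →ₗ[ℝ] J.eigenspace 1 :=
  LinearMap.codRestrict _ ((1/2 : ℝ) • ((1 : Module.End ℝ V) + J)) fun v => by
    rw [s5_memP]
    simp [map_add, s5_JJ J hJ2, add_comm]

/-- Projection onto the -1 eigenspace. -/
private noncomputable def s5_pN (J : Module.End ℝ V) (hJ2 : J * J = 1) :
    V →ₗ[ℝ] J.eigenspace (-1) :=
  LinearMap.codRestrict _ ((1/2 : ℝ) • ((1 : Module.End ℝ V) - J)) fun v => by
    rw [s5_memN]
    simp [map_sub, s5_JJ J hJ2, smul_sub]

private theorem s5_pP_apply (J : Module.End ℝ V) (hJ2 : J * J = 1) (v : V) :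
    (s5_pP J hJ2 v : V) = (1/2 : ℝ) • (v + J v) := by
  simp [s5_pP]

private theorem s5_pN_apply (J : Module.End ℝ V) (hJ2 : J * J = 1) (v : V) :
    (s5_pN J hJ2 v : V) = (1/2 : ℝ) • (v - J v) := by
  simp [s5_pN]

private theorem s5_decomp (J : Module.End ℝ V) (hJ2 : J * J = 1) (v : V) :
    (s5_pP J hJ2 v : V) + (s5_pN J hJ2 v : V) = v := by
  rw [s5_pP_apply, s5_pN_apply]
  module

end Stmt5Aux

set_option maxHeartbeats 1600000 in
/-- If `J ∘ J = id` and `J` is `η`-skew-adjoint, with `V₊` the `+1` eigenspace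
of `J`, then restriction to `V₊` is an isomorphism of real Lie algebras from the Lie algebra
of linear operators commuting with `J` and skew-adjoint with respect to `η` onto the general
linear Lie algebra `gl(V₊)` of all linear endomorphisms of `V₊`. -/
theorem stmt_5 {V : Type*} [AddCommGroup V] [Module ℝ V] [FiniteDimensional ℝ V]
    (η : V →ₗ[ℝ] V →ₗ[ℝ] ℝ)
    (hηsymm : ∀ a b, η a b = η b a)
    (hηnondeg : ∀ a, (∀ b, η a b = 0) → a = 0)
    (J : Module.End ℝ V) (hJ2 : J * J = 1)
    (hJskew : ∀ a b, η (J a) b + η a (J b) = 0)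
    (g : LieSubalgebra ℝ (Module.End ℝ V))
    (hg : ∀ l : Module.End ℝ V,
      l ∈ g ↔ (l * J = J * l ∧ ∀ a b, η (l a) b + η a (l b) = 0)) :
    ∃ Φ : g ≃ₗ⁅ℝ⁆ Module.End ℝ (J.eigenspace 1),
      ∀ (l : g) (v : J.eigenspace 1), ((Φ l) v : V) = (l : Module.End ℝ V) v := by
  classical
  set P : Submodule ℝ V := J.eigenspace 1 with hP
  set N : Submodule ℝ V := J.eigenspace (-1) with hN
  -- members of g preserve P
  have hres : ∀ l : g, ∀ x ∈ P, (l : Module.End ℝ V) x ∈ P := by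
    intro l x hx
    have hc := ((hg l).mp l.2).1
    rw [hP, s5_memP] at hx ⊢
    have := congrArg (fun f : Module.End ℝ V => f x) hc
    simp only [Module.End.mul_apply] at this
    rw [← this, hx]
  -- key eigenvector facts
  have hJP : ∀ x : P, J (x : V) = x := fun x => (s5_memP J).mp x.2
  have hJN : ∀ y : N, J (y : V) = -(y : V) := fun y => (s5_memN J).mp y.2
  -- η vanishes on P × P and on N × N
  have hPP : ∀ a b : V, J a = a → J b = b → η a b = 0 := by
    intro a b ha hb
    have := hJskew a b
    rw [ha, hb] at this
    linarith
  have hNN : ∀ a b : V, J a = -a → J b = -b → η a b = 0 := by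
    intro a b ha hb
    have := hJskew a b
    rw [ha, hb] at this
    simp only [map_neg, LinearMap.neg_apply] at this
    linarith
  -- nondegenerate pairing facts
  have hpairN : ∀ b : V, J b = -b → (∀ a : V, J a = a → η a b = 0) → b = 0 := by
    intro b hb h
    apply hηnondeg
    intro v
    rw [hηsymm]
    have hv := s5_decomp J hJ2 v
    have h1 : η ((s5_pP J hJ2 v : V)) b = 0 := h _ (hJP _)
    have h2 : η ((s5_pN J hJ2 v : V)) b = 0 := hNN _ _ (hJN _) hb
    calc η v b = η ((s5_pP J hJ2 v : V) + (s5_pN J hJ2 v : V)) b := by rw [hv]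
    _ = 0 := by rw [map_add, LinearMap.add_apply, h1, h2, add_zero]
  have hpairP : ∀ a : V, J a = a → (∀ b : V, J b = -b → η b a = 0) → a = 0 := by
    intro a ha h
    apply hηnondeg
    intro v
    rw [hηsymm]
    have hv := s5_decomp J hJ2 v
    have h1 : η ((s5_pP J hJ2 v : V)) a = 0 := hPP _ _ (hJP _) ha
    have h2 : η ((s5_pN J hJ2 v : V)) a = 0 := h _ (hJN _)
    calc η v a = η ((s5_pP J hJ2 v : V) + (s5_pN J hJ2 v : V)) a := by rw [hv]
    _ = 0 := by rw [map_add, LinearMap.add_apply, h1, h2, add_zero]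
  -- the pairing maps
  set E : N →ₗ[ℝ] Module.Dual ℝ P := ((η.flip ∘ₗ N.subtype).compl₂ P.subtype) with hE
  have hEapp : ∀ (b : N) (a : P), E b a = η (a : V) (b : V) := by
    intro b a
    simp [hE, LinearMap.compl₂_apply, LinearMap.flip_apply]
  have hEinj : Function.Injective E := by
    rw [← LinearMap.ker_eq_bot, LinearMap.ker_eq_bot']
    intro b hb
    have hzero : ∀ a : V, J a = a → η a (b : V) = 0 := by
      intro a ha
      have := congrArg (fun φ : Module.Dual ℝ P => φ ⟨a, (s5_memP J).mpr ha⟩) hb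
      simpa [hEapp] using this
    exact Subtype.ext (hpairN _ (hJN b) hzero)
  set E' : P →ₗ[ℝ] Module.Dual ℝ N := ((η.flip ∘ₗ P.subtype).compl₂ N.subtype) with hE'
  have hE'inj : Function.Injective E' := by
    rw [← LinearMap.ker_eq_bot, LinearMap.ker_eq_bot']
    intro a ha
    have hzero : ∀ b : V, J b = -b → η b (a : V) = 0 := by
      intro b hb
      have := congrArg (fun φ : Module.Dual ℝ N => φ ⟨b, (s5_memN J).mpr hb⟩) ha
      simpa [hE', LinearMap.compl₂_apply, LinearMap.flip_apply] using this
    exact Subtype.ext (hpairP _ (hJP a) hzero)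
  have hrank : Module.finrank ℝ N = Module.finrank ℝ (Module.Dual ℝ P) := by
    rw [Subspace.dual_finrank_eq]
    have h1 := LinearMap.finrank_le_finrank_of_injective hEinj
    have h2 := LinearMap.finrank_le_finrank_of_injective hE'inj
    rw [Subspace.dual_finrank_eq] at h1
    rw [Subspace.dual_finrank_eq] at h2
    omega
  set e : N ≃ₗ[ℝ] Module.Dual ℝ P := E.linearEquivOfInjective hEinj hrank with he
  have heapp : ∀ b : N, e b = E b := fun b => E.linearEquivOfInjective_apply hEinj hrank b
  -- the restriction Lie algebra homomorphism
  let φ : g →ₗ⁅ℝ⁆ Module.End ℝ P :=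
    { toFun := fun l => (l : Module.End ℝ V).restrict (hres l)
      map_add' := fun x y => LinearMap.ext fun v => Subtype.ext (by
        simp [LinearMap.restrict_apply])
      map_smul' := fun c x => LinearMap.ext fun v => Subtype.ext rfl
      map_lie' := fun {x y} => LinearMap.ext fun v => Subtype.ext (by
        simp [LinearMap.restrict_apply, LieSubalgebra.coe_bracket,
          LieRing.of_associative_ring_bracket, Module.End.mul_apply]) }
  have hφapp : ∀ (l : g) (v : P), ((φ l) v : V) = (l : Module.End ℝ V) v := by
    intro l v
    simp [φ, LinearMap.restrict_apply]
  -- injectivity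
  have hinj : Function.Injective φ := by
    intro l m hlm
    have hd : ∀ v : P, ((l : Module.End ℝ V) - m) (v : V) = 0 := by
      intro v
      have h2 : ((φ l) v : V) = ((φ m) v : V) := congrArg (fun f : Module.End ℝ P => ((f v : P) : V)) hlm
      rw [hφapp, hφapp] at h2
      simp [LinearMap.sub_apply, h2]
    set d : Module.End ℝ V := (l : Module.End ℝ V) - m with hdd
    have hcomm : d * J = J * d := by
      have hl := ((hg l).mp l.2).1
      have hm := ((hg m).mp m.2).1
      rw [hdd, sub_mul, mul_sub, hl, hm]
    have hskew : ∀ a b, η (d a) b + η a (d b) = 0 := by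
      intro a b
      have hl := ((hg l).mp l.2).2 a b
      have hm := ((hg m).mp m.2).2 a b
      simp only [hdd, LinearMap.sub_apply, map_sub] at *
      linarith
    have hdN : ∀ y : N, d (y : V) = 0 := by
      intro y
      apply hpairN
      · have := congrArg (fun f : Module.End ℝ V => f (y : V)) hcomm
        simp only [Module.End.mul_apply] at this
        rw [hJN y, map_neg] at this
        rw [← this]
      · intro a ha
        have h1 := hskew a (y : V)
        have h2 : d a = 0 := hd ⟨a, (s5_memP J).mpr ha⟩
        rw [h2] at h1
        simp only [map_zero, LinearMap.zero_apply, zero_add] at h1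
        exact h1
    have hdz : d = 0 := by
      ext v
      have := s5_decomp J hJ2 v
      rw [LinearMap.zero_apply, ← this, map_add, hd (s5_pP J hJ2 v), hdN (s5_pN J hJ2 v),
        add_zero]
    have : (l : Module.End ℝ V) = m := by
      have := sub_eq_zero.mp hdz
      exact this
    exact Subtype.ext this
  -- surjectivity
  have hsurj : Function.Surjective φ := by
    intro f
    set gN : Module.End ℝ N := -(e.symm.toLinearMap ∘ₗ f.dualMap ∘ₗ e.toLinearMap) with hgN
    have hkey : ∀ (a : P) (b : N), η (a : V) ((gN b : N) : V) = -η ((f a : P) : V) (b : V) := by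
      intro a b
      have h1 : E (gN b) = -(f.dualMap (e b)) := by
        rw [hgN]
        simp only [LinearMap.neg_apply, LinearMap.coe_comp, Function.comp_apply,
          LinearEquiv.coe_coe, map_neg]
        rw [← heapp, e.apply_symm_apply]
      have := congrArg (fun ψ : Module.Dual ℝ P => ψ a) h1
      simp only [hEapp, LinearMap.neg_apply, LinearMap.dualMap_apply, heapp, hEapp] at this
      exact this
    set L : Module.End ℝ V :=
      P.subtype ∘ₗ (f ∘ₗ s5_pP J hJ2) + N.subtype ∘ₗ (gN ∘ₗ s5_pN J hJ2) with hL
    have hLapp : ∀ v : V, L v = ((f (s5_pP J hJ2 v) : P) : V) + ((gN (s5_pN J hJ2 v) : N) : V) := by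
      intro v
      simp [hL]
    have hpPP : ∀ x : P, s5_pP J hJ2 (x : V) = x := by
      intro x
      apply Subtype.ext
      rw [s5_pP_apply, hJP x]
      module
    have hpNP : ∀ x : P, s5_pN J hJ2 (x : V) = 0 := by
      intro x
      apply Subtype.ext
      rw [s5_pN_apply, hJP x]
      simp
    have hpPN : ∀ y : N, s5_pP J hJ2 (y : V) = 0 := by
      intro y
      apply Subtype.ext
      rw [s5_pP_apply, hJN y]
      simp
    have hpNN : ∀ y : N, s5_pN J hJ2 (y : V) = y := by
      intro y
      apply Subtype.ext
      rw [s5_pN_apply, hJN y]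
      module
    have hLP : ∀ x : P, L (x : V) = ((f x : P) : V) := by
      intro x
      rw [hLapp, hpPP, hpNP]
      simp
    have hLmem : L ∈ g := by
      rw [hg]
      constructor
      · ext v
        simp only [Module.End.mul_apply]
        have hpPJ : s5_pP J hJ2 (J v) = s5_pP J hJ2 v := by
          apply Subtype.ext
          rw [s5_pP_apply, s5_pP_apply, s5_JJ J hJ2]
          module
        have hpNJ : s5_pN J hJ2 (J v) = -(s5_pN J hJ2 v) := by
          apply Subtype.ext
          rw [Submodule.coe_neg, s5_pN_apply, s5_pN_apply, s5_JJ J hJ2]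
          module
        rw [hLapp, hLapp, hpPJ, hpNJ, map_add, hJP (f (s5_pP J hJ2 v)),
          hJN (gN (s5_pN J hJ2 v)), map_neg]
        simp
      · intro a b
        have ha := s5_decomp J hJ2 a
        have hb := s5_decomp J hJ2 b
        set aP := s5_pP J hJ2 a
        set aN := s5_pN J hJ2 a
        set bP := s5_pP J hJ2 b
        set bN := s5_pN J hJ2 b
        have t1 : η ((f aP : P) : V) ((bP : P) : V) = 0 := hPP _ _ (hJP _) (hJP _)
        have t2 : η ((gN aN : N) : V) ((bN : N) : V) = 0 := hNN _ _ (hJN _) (hJN _)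
        have t3 : η ((aP : P) : V) ((f bP : P) : V) = 0 := hPP _ _ (hJP _) (hJP _)
        have t4 : η ((aN : N) : V) ((gN bN : N) : V) = 0 := hNN _ _ (hJN _) (hJN _)
        have k1 := hkey aP bN
        have k2 := hkey bP aN
        have s1 := hηsymm ((gN aN : N) : V) ((bP : P) : V)
        have s2 := hηsymm ((aN : N) : V) ((f bP : P) : V)
        calc η (L a) b + η a (L b)
            = η (L a) ((bP : V) + (bN : V)) + η ((aP : V) + (aN : V)) (L b) := by rw [ha, hb]
          _ = 0 := by
              rw [hLapp a, hLapp b]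
              simp only [map_add, LinearMap.add_apply]
              linarith
    refine ⟨⟨L, hLmem⟩, ?_⟩
    ext v
    show ((φ ⟨L, hLmem⟩ v : P) : V) = ((f v : P) : V)
    rw [hφapp]
    exact hLP v
  refine ⟨LieEquiv.ofBijective φ ⟨hinj, hsurj⟩, ?_⟩
  intro l v
  exact hφapp l v
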